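/- For s ≥ 0, the subspace P_s of ℚ(q)[X₀,…,X_{r+1}] spanned by monomials X^a with Σ a_i = s is invariant and irreducible under the operators e_i, f_i (0 ≤ i ≤ r) defined by e_i X^a = [ξ_{i+1} a_{i+1}] X^{a+e_i−e_{i+1}} and f_i X^a = [ξ_i' a_i] X^{a−e_i+e_{i+1}}, where ξ_j, ξ_j' are arbitrary fixed positive integers: every nonzero subspace of P_s stable under all e_i and f_i equals P_s. -/

import Mathlib

noncomputable section

/-- The field ℚ(q) of rational functions over ℚ. -/
abbrev K : Type := RatFunc ℚ

/-- The indeterminate q. -/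
def q : K := RatFunc.X

/-- The quantum integer [m]. -/
def qint (m : ℤ) : K := (q ^ m - q ^ (-m)) / (q - q⁻¹)

namespace Stmt16Aux

lemma q_ne_zero : q ≠ 0 := RatFunc.X_ne_zero

lemma q_pow_ne_one {n : ℕ} (hn : 0 < n) : q ^ n ≠ 1 := by
  intro h
  have h2 : (Polynomial.X : Polynomial ℚ) ^ n = 1 := by
    apply IsFractionRing.injective (Polynomial ℚ) (RatFunc ℚ)
    rw [map_pow, map_one]
    exact h
  have := congrArg Polynomial.natDegree h2
  simp [Polynomial.natDegree_X_pow] at this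
  omega

lemma qint_zero : qint 0 = 0 := by simp [qint]

lemma qint_ne_zero {n : ℕ} (hn : 0 < n) : qint (n : ℤ) ≠ 0 := by
  have hq : q ≠ 0 := q_ne_zero
  have hnum : q ^ (n:ℤ) - q ^ (-(n:ℤ)) ≠ 0 := by
    rw [sub_ne_zero]
    intro h
    have h1 : q ^ ((n:ℤ) + (n:ℤ)) = 1 := by
      have := congrArg (· * q ^ (n:ℤ)) h
      simp only [← zpow_add₀ hq] at this
      simpa using this
    have : q ^ (n + n) = 1 := by
      rw [← zpow_natCast q (n+n)]; push_cast; exact h1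
    exact q_pow_ne_one (by omega) this
  have hden : q - q⁻¹ ≠ 0 := by
    rw [sub_ne_zero]
    intro h
    have h1 : q * q = 1 := by
      nth_rewrite 2 [h]
      exact mul_inv_cancel₀ hq
    have : q ^ 2 = 1 := by rw [pow_two]; exact h1
    exact q_pow_ne_one (by omega) this
  exact div_ne_zero hnum hden

variable {n : ℕ}

/-- degree as sum over univ -/
lemma degree_eq_sum (a : Fin n →₀ ℕ) : Finsupp.degree a = ∑ x : Fin n, a x := by
  rw [Finsupp.degree]
  exact Finset.sum_subset (Finset.subset_univ _)
    (fun x _ hx => by simpa using Finsupp.notMem_support_iff.mp hx)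

/-- the exponent move map -/
def mv (j k : Fin n) (a : Fin n →₀ ℕ) : Fin n →₀ ℕ :=
  a + Finsupp.single j 1 - Finsupp.single k 1

lemma mv_alt {j k : Fin n} (hjk : j ≠ k) (a : Fin n →₀ ℕ) :
    a - Finsupp.single k 1 + Finsupp.single j 1 = mv j k a := by
  ext x
  simp only [mv, Finsupp.add_apply, Finsupp.tsub_apply, Finsupp.single_apply]
  rcases eq_or_ne j x with rfl | hjx
  · rw [if_neg (fun h => hjk h.symm)]
    omega
  · split_ifs <;> omega

lemma move_add (j k : Fin n) (a : Fin n →₀ ℕ) (hk : 0 < a k) :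
    mv j k a + Finsupp.single k 1 = a + Finsupp.single j 1 := by
  ext x
  rcases eq_or_ne k x with rfl | hkx
  · simp only [mv, Finsupp.add_apply, Finsupp.tsub_apply, Finsupp.single_apply]
    split_ifs <;> omega
  · simp only [mv, Finsupp.add_apply, Finsupp.tsub_apply, Finsupp.single_apply]
    split_ifs <;> omega

lemma mv_apply_j {j k : Fin n} (hjk : j ≠ k) (a : Fin n →₀ ℕ) :
    mv j k a j = a j + 1 := by
  simp only [mv, Finsupp.add_apply, Finsupp.tsub_apply, Finsupp.single_apply]
  split_ifs <;> simp_all <;> omega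

lemma mv_mv {j k : Fin n} (hjk : j ≠ k) (a : Fin n →₀ ℕ) (hk : 0 < a k) :
    mv k j (mv j k a) = a := by
  have h1 : mv j k a + Finsupp.single k 1 = a + Finsupp.single j 1 := move_add j k a hk
  rw [mv, h1, add_tsub_cancel_right]

lemma move_inj {j k : Fin n} (hjk : j ≠ k) {a b : Fin n →₀ ℕ}
    (ha : 0 < a k) (hb : 0 < b k) (h : mv j k a = mv j k b) : a = b := by
  have h2 : mv j k a + Finsupp.single k 1 = mv j k b + Finsupp.single k 1 := by rw [h]
  rw [move_add j k a ha, move_add j k b hb] at h2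
  exact add_right_cancel h2

lemma deg_move (j k : Fin n) (a : Fin n →₀ ℕ) (hk : 0 < a k) :
    Finsupp.degree (mv j k a) = Finsupp.degree a := by
  have h2 := congrArg Finsupp.degree (move_add j k a hk)
  simp only [degree_eq_sum, Finsupp.add_apply, Finset.sum_add_distrib] at h2 ⊢
  have hs : ∀ m : Fin n, ∑ x : Fin n, (Finsupp.single m 1 : Fin n →₀ ℕ) x = 1 := by
    intro m
    simp [Finsupp.single_apply]
  rw [hs, hs] at h2
  omega

/-- weight -/
def wt (a : Fin n →₀ ℕ) : ℕ := ∑ x : Fin n, x.val * a x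

lemma wt_move (j k : Fin n) (a : Fin n →₀ ℕ) (hk : 0 < a k) :
    wt (mv j k a) + k.val = wt a + j.val := by
  have h2 := congrArg wt (move_add j k a hk)
  simp only [wt, Finsupp.add_apply, mul_add, Finset.sum_add_distrib] at h2 ⊢
  have hs : ∀ m : Fin n, ∑ x : Fin n, x.val * (Finsupp.single m 1 : Fin n →₀ ℕ) x = m.val := by
    intro m
    simp [Finsupp.single_apply, mul_ite]
  rw [hs, hs] at h2
  omega

lemma wt_le (a : Fin n →₀ ℕ) (k : Fin n) : k.val * a k ≤ wt a :=
  Finset.single_le_sum (f := fun x => x.val * a x) (fun _ _ => Nat.zero_le _)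
    (Finset.mem_univ k)

lemma wt_eq_zero {a : Fin n →₀ ℕ} (h : wt a = 0) {k : Fin n} (hk : k.val ≠ 0) : a k = 0 := by
  have h1 := wt_le a k
  rw [h] at h1
  rcases Nat.mul_eq_zero.mp (Nat.le_zero.mp h1) with h2 | h2
  · exact absurd h2 hk
  · exact h2

lemma eq_single_of_wt_eq_zero {m : ℕ} {a : Fin (m+1) →₀ ℕ} (h : wt a = 0) :
    a = Finsupp.single 0 (Finsupp.degree a) := by
  ext x
  rcases eq_or_ne x 0 with rfl | hx
  · rw [Finsupp.single_eq_same, degree_eq_sum]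
    rw [Finset.sum_eq_single 0]
    · intro b _ hb
      exact wt_eq_zero h (fun h' => hb (Fin.ext (by simp [h'])))
    · simp
  · rw [Finsupp.single_eq_of_ne hx]
    exact wt_eq_zero h (fun h' => hx (Fin.ext (by simp [h'])))

lemma exists_pos_of_wt_ne_zero {a : Fin n →₀ ℕ} (h : wt a ≠ 0) :
    ∃ x : Fin n, x.val ≠ 0 ∧ 0 < a x := by
  by_contra hc
  push_neg at hc
  apply h
  refine Finset.sum_eq_zero fun x _ => ?_
  rcases eq_or_ne x.val 0 with hx | hx
  · rw [hx, zero_mul]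
  · have h2 : a x = 0 := by have := hc x hx; omega
    rw [h2, mul_zero]

section Op

lemma T_apply (T : Module.End K (MvPolynomial (Fin n) K)) (j k : Fin n) (c : ℕ)
    (hT : ∀ a : Fin n →₀ ℕ, T (MvPolynomial.monomial a (1 : K))
      = qint ((c * a k : ℕ) : ℤ) • MvPolynomial.monomial (mv j k a) (1 : K))
    (v : MvPolynomial (Fin n) K) :
    T v = ∑ a ∈ v.support,
      (MvPolynomial.coeff a v * qint ((c * a k : ℕ) : ℤ)) •
        MvPolynomial.monomial (mv j k a) (1 : K) := by
  conv_lhs => rw [v.as_sum]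
  rw [map_sum]
  refine Finset.sum_congr rfl fun a _ => ?_
  have : (MvPolynomial.monomial a) (MvPolynomial.coeff a v)
      = MvPolynomial.coeff a v • MvPolynomial.monomial a (1 : K) := by
    rw [MvPolynomial.smul_monomial, smul_eq_mul, mul_one]
  rw [this, map_smul, hT, smul_smul]

lemma T_coeff (T : Module.End K (MvPolynomial (Fin n) K)) {j k : Fin n} (c : ℕ)
    (hT : ∀ a : Fin n →₀ ℕ, T (MvPolynomial.monomial a (1 : K))
      = qint ((c * a k : ℕ) : ℤ) • MvPolynomial.monomial (mv j k a) (1 : K))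
    (hjk : j ≠ k) (v : MvPolynomial (Fin n) K) (a₀ : Fin n →₀ ℕ)
    (h₀ : a₀ ∈ v.support) (hk : 0 < a₀ k) :
    MvPolynomial.coeff (mv j k a₀) (T v)
      = MvPolynomial.coeff a₀ v * qint ((c * a₀ k : ℕ) : ℤ) := by
  rw [T_apply T j k c hT v, MvPolynomial.coeff_sum]
  rw [Finset.sum_eq_single_of_mem a₀ h₀]
  · rw [MvPolynomial.coeff_smul, MvPolynomial.coeff_monomial, if_pos rfl, smul_eq_mul, mul_one]
  · intro b hb hba
    rw [MvPolynomial.coeff_smul, MvPolynomial.coeff_monomial]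
    rcases Nat.eq_zero_or_pos (b k) with hbk | hbk
    · simp [hbk, qint_zero]
    · rw [if_neg (fun h => hba (move_inj hjk hbk hk h)), smul_zero]

lemma T_ne_zero (T : Module.End K (MvPolynomial (Fin n) K)) {j k : Fin n} {c : ℕ}
    (hc : 0 < c)
    (hT : ∀ a : Fin n →₀ ℕ, T (MvPolynomial.monomial a (1 : K))
      = qint ((c * a k : ℕ) : ℤ) • MvPolynomial.monomial (mv j k a) (1 : K))
    (hjk : j ≠ k) (v : MvPolynomial (Fin n) K) (a₀ : Fin n →₀ ℕ)
    (h₀ : a₀ ∈ v.support) (hk : 0 < a₀ k) : T v ≠ 0 := by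
  intro h0
  have h1 := T_coeff T c hT hjk v a₀ h₀ hk
  rw [h0, MvPolynomial.coeff_zero] at h1
  have h2 : MvPolynomial.coeff a₀ v ≠ 0 := MvPolynomial.mem_support_iff.mp h₀
  have h3 : qint ((c * a₀ k : ℕ) : ℤ) ≠ 0 := qint_ne_zero (Nat.mul_pos hc hk)
  exact (mul_ne_zero h2 h3) h1.symm

lemma T_support (T : Module.End K (MvPolynomial (Fin n) K)) {j k : Fin n} (c : ℕ)
    (hT : ∀ a : Fin n →₀ ℕ, T (MvPolynomial.monomial a (1 : K))
      = qint ((c * a k : ℕ) : ℤ) • MvPolynomial.monomial (mv j k a) (1 : K))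
    (v : MvPolynomial (Fin n) K) {b : Fin n →₀ ℕ} (hb : b ∈ (T v).support) :
    ∃ a ∈ v.support, 0 < a k ∧ b = mv j k a := by
  classical
  rw [T_apply T j k c hT v] at hb
  have := MvPolynomial.support_sum hb
  rw [Finset.mem_biUnion] at this
  obtain ⟨a, ha, hba⟩ := this
  refine ⟨a, ha, ?_, ?_⟩
  · rcases Nat.eq_zero_or_pos (a k) with hak | hak
    · exfalso
      rw [hak, mul_zero] at hba
      simp [qint_zero] at hba
    · exact hak
  · have h2 := MvPolynomial.support_smul hba
    rw [MvPolynomial.support_monomial] at h2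
    simp only [one_ne_zero, if_false, Finset.mem_singleton] at h2
    exact h2

lemma T_mem_homog (T : Module.End K (MvPolynomial (Fin n) K)) {j k : Fin n} (c : ℕ) {s : ℕ}
    (hT : ∀ a : Fin n →₀ ℕ, T (MvPolynomial.monomial a (1 : K))
      = qint ((c * a k : ℕ) : ℤ) • MvPolynomial.monomial (mv j k a) (1 : K))
    (v : MvPolynomial (Fin n) K)
    (hv : v ∈ MvPolynomial.homogeneousSubmodule (Fin n) K s) :
    T v ∈ MvPolynomial.homogeneousSubmodule (Fin n) K s := by
  rw [T_apply T j k c hT v]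
  refine Submodule.sum_mem _ fun a ha => ?_
  rcases Nat.eq_zero_or_pos (a k) with hak | hak
  · rw [hak, mul_zero]
    norm_num [qint_zero]
  · refine Submodule.smul_mem _ _ ?_
    rw [MvPolynomial.mem_homogeneousSubmodule]
    refine MvPolynomial.isHomogeneous_monomial _ ?_
    have hdeg : Finsupp.degree a = s := by
      have h1 := (MvPolynomial.mem_homogeneousSubmodule _ _).mp hv
        (MvPolynomial.mem_support_iff.mp ha)
      rw [Finsupp.degree_eq_weight_one]
      exact h1
    rw [deg_move j k a hak, hdeg]

end Op

end Stmt16Aux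

open Stmt16Aux

/-- for s ≥ 0, the homogeneous component P_s of ℚ(q)[X₀,…,X_{r+1}]
is invariant and irreducible under the operators e_i, f_i (0 ≤ i ≤ r) given by
e_i X^a = [ξ_{i+1} a_{i+1}] X^{a+e_i−e_{i+1}} and f_i X^a = [ξ'_i a_i] X^{a−e_i+e_{i+1}}. -/
theorem stmt16 (r s : ℕ) (ξ ξ' : Fin (r + 2) → ℕ) (hξ : ∀ i, 0 < ξ i)
    (hξ' : ∀ i, 0 < ξ' i)
    (e f : Fin (r + 1) → Module.End K (MvPolynomial (Fin (r + 2)) K))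
    (he : ∀ (i : Fin (r + 1)) (a : Fin (r + 2) →₀ ℕ),
      e i (MvPolynomial.monomial a (1 : K))
        = qint ((ξ i.succ * a i.succ : ℕ) : ℤ) •
            MvPolynomial.monomial
              (a + Finsupp.single i.castSucc 1 - Finsupp.single i.succ 1) (1 : K))
    (hf : ∀ (i : Fin (r + 1)) (a : Fin (r + 2) →₀ ℕ),
      f i (MvPolynomial.monomial a (1 : K))
        = qint ((ξ' i.castSucc * a i.castSucc : ℕ) : ℤ) •
            MvPolynomial.monomial
              (a - Finsupp.single i.castSucc 1 + Finsupp.single i.succ 1) (1 : K)) :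
    (∀ i : Fin (r + 1), ∀ v ∈ MvPolynomial.homogeneousSubmodule (Fin (r + 2)) K s,
        e i v ∈ MvPolynomial.homogeneousSubmodule (Fin (r + 2)) K s ∧
        f i v ∈ MvPolynomial.homogeneousSubmodule (Fin (r + 2)) K s) ∧
    (∀ V : Submodule K (MvPolynomial (Fin (r + 2)) K),
      V ≤ MvPolynomial.homogeneousSubmodule (Fin (r + 2)) K s → V ≠ ⊥ →
      (∀ i : Fin (r + 1), ∀ v ∈ V, e i v ∈ V ∧ f i v ∈ V) →
      V = MvPolynomial.homogeneousSubmodule (Fin (r + 2)) K s) := by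
  classical
  have hne : ∀ i : Fin (r+1), (i.castSucc : Fin (r+2)) ≠ i.succ :=
    fun i => (Fin.castSucc_lt_succ : i.castSucc < i.succ).ne
  have heT : ∀ (i : Fin (r+1)) (a : Fin (r+2) →₀ ℕ),
      e i (MvPolynomial.monomial a (1 : K))
        = qint ((ξ i.succ * a i.succ : ℕ) : ℤ) •
            MvPolynomial.monomial (mv i.castSucc i.succ a) (1 : K) := by
    intro i a
    rw [he i a]; rfl
  have hfT : ∀ (i : Fin (r+1)) (a : Fin (r+2) →₀ ℕ),
      f i (MvPolynomial.monomial a (1 : K))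
        = qint ((ξ' i.castSucc * a i.castSucc : ℕ) : ℤ) •
            MvPolynomial.monomial (mv i.succ i.castSucc a) (1 : K) := by
    intro i a
    rw [hf i a, mv_alt (hne i).symm]
  constructor
  · intro i v hv
    exact ⟨T_mem_homog (e i) (ξ i.succ) (heT i) v hv,
           T_mem_homog (f i) (ξ' i.castSucc) (hfT i) v hv⟩
  · intro V hVle hVbot hVstab
    have hdegs : ∀ v ∈ V, ∀ a ∈ v.support, Finsupp.degree a = s := by
      intro v hv a ha
      have h1 := (MvPolynomial.mem_homogeneousSubmodule _ _).mp (hVle hv)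
        (MvPolynomial.mem_support_iff.mp ha)
      rw [Finsupp.degree_eq_weight_one]
      exact h1
    have hidx : ∀ x : Fin (r+2), x.val ≠ 0 → ∃ i : Fin (r+1), i.succ = x := by
      intro x hx
      refine ⟨⟨x.val - 1, by have := x.isLt; omega⟩, ?_⟩
      apply Fin.ext
      simp only [Fin.val_succ]
      omega
    -- base argument
    have baseArg : ∀ v, v ∈ V → v ≠ 0 → (∀ a ∈ v.support, wt a = 0) →
        MvPolynomial.monomial (Finsupp.single 0 s) (1:K) ∈ V := by
      intro v hvV hv0 hz
      have hsub : v.support ⊆ {Finsupp.single 0 s} := by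
        intro a ha
        rw [Finset.mem_singleton]
        have h1 := eq_single_of_wt_eq_zero (hz a ha)
        rw [hdegs v hvV a ha] at h1
        exact h1
      have hnonempty : v.support.Nonempty := by
        rw [Finset.nonempty_iff_ne_empty]
        intro h
        exact hv0 (MvPolynomial.support_eq_empty.mp h)
      have hsupp : v.support = {Finsupp.single 0 s} :=
        (Finset.Nonempty.subset_singleton_iff hnonempty).mp hsub
      have hveq : v = MvPolynomial.monomial (Finsupp.single 0 s)
          (MvPolynomial.coeff (Finsupp.single 0 s) v) := by
        conv_lhs => rw [v.as_sum]
        rw [hsupp, Finset.sum_singleton]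
      have hc0 : MvPolynomial.coeff (Finsupp.single 0 s) v ≠ 0 := by
        intro h
        apply hv0
        rw [hveq, h, map_zero]
      have hmono : (MvPolynomial.coeff (Finsupp.single 0 s) v)⁻¹ • v
          = MvPolynomial.monomial (Finsupp.single 0 s) (1:K) := by
        set c0 := MvPolynomial.coeff (Finsupp.single 0 s) v with hcc
        rw [hveq, MvPolynomial.smul_monomial, smul_eq_mul, inv_mul_cancel₀ hc0]
      rw [← hmono]
      exact Submodule.smul_mem V _ hvV
    -- step A
    have hstepA : ∀ N : ℕ, ∀ v, v ∈ V → v ≠ 0 → (∑ a ∈ v.support, wt a) ≤ N →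
        MvPolynomial.monomial (Finsupp.single 0 s) (1:K) ∈ V := by
      intro N
      induction N with
      | zero =>
        intro v hvV hv0 hW
        refine baseArg v hvV hv0 fun a ha => ?_
        have h1 : wt a ≤ ∑ a ∈ v.support, wt a :=
          Finset.single_le_sum (fun _ _ => Nat.zero_le _) ha
        omega
      | succ N ih =>
        intro v hvV hv0 hW
        by_cases hz : ∀ a ∈ v.support, wt a = 0
        · exact baseArg v hvV hv0 hz
        · push_neg at hz
          obtain ⟨a₀, ha₀, hwa₀⟩ := hz
          obtain ⟨x, hx0, hax⟩ := exists_pos_of_wt_ne_zero hwa₀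
          obtain ⟨i, rfl⟩ := hidx x hx0
          have hjk : (i.castSucc : Fin (r+2)) ≠ i.succ := hne i
          have hv'V : e i v ∈ V := (hVstab i v hvV).1
          have hv'0 : e i v ≠ 0 :=
            T_ne_zero (e i) (hξ i.succ) (heT i) hjk v a₀ ha₀ hax
          -- weight bound
          set S := v.support.filter (fun a => 0 < a i.succ) with hS
          have hsub : (e i v).support ⊆ S.image (mv i.castSucc i.succ) := by
            intro b hb
            obtain ⟨a, ha, hak, rfl⟩ := T_support (e i) (ξ i.succ) (heT i) v hb
            exact Finset.mem_image_of_mem _ (Finset.mem_filter.mpr ⟨ha, hak⟩)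
          have hinj : ∀ a ∈ S, ∀ b ∈ S, mv i.castSucc i.succ a = mv i.castSucc i.succ b
              → a = b := by
            intro a ha b hb h
            exact move_inj hjk (Finset.mem_filter.mp ha).2 (Finset.mem_filter.mp hb).2 h
          have h1 : (∑ b ∈ (e i v).support, wt b)
              ≤ ∑ b ∈ S.image (mv i.castSucc i.succ), wt b :=
            Finset.sum_le_sum_of_subset hsub
          have h2 : ∑ b ∈ S.image (mv i.castSucc i.succ), wt b
              = ∑ a ∈ S, wt (mv i.castSucc i.succ a) :=
            Finset.sum_image hinj
          have h3 : ∀ a ∈ S, wt (mv i.castSucc i.succ a) + 1 = wt a := by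
            intro a ha
            have := wt_move i.castSucc i.succ a (Finset.mem_filter.mp ha).2
            rw [Fin.coe_castSucc, Fin.val_succ] at this
            omega
          have h4 : (∑ a ∈ S, wt (mv i.castSucc i.succ a)) + S.card = ∑ a ∈ S, wt a := by
            rw [Finset.card_eq_sum_ones, ← Finset.sum_add_distrib]
            exact Finset.sum_congr rfl h3
          have h5 : ∑ a ∈ S, wt a ≤ ∑ a ∈ v.support, wt a :=
            Finset.sum_le_sum_of_subset (Finset.filter_subset _ _)
          have h6 : 0 < S.card := by
            rw [Finset.card_pos]
            exact ⟨a₀, Finset.mem_filter.mpr ⟨ha₀, hax⟩⟩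
          exact ih (e i v) hv'V hv'0 (by omega)
    obtain ⟨v₀, hv₀V, hv₀⟩ := (Submodule.ne_bot_iff V).mp hVbot
    have hA : MvPolynomial.monomial (Finsupp.single 0 s) (1:K) ∈ V :=
      hstepA (∑ a ∈ v₀.support, wt a) v₀ hv₀V hv₀ le_rfl
    -- step B
    have hB : ∀ M : ℕ, ∀ a : Fin (r+2) →₀ ℕ, Finsupp.degree a = s → wt a ≤ M →
        MvPolynomial.monomial a (1:K) ∈ V := by
      intro M
      induction M with
      | zero =>
        intro a hdeg hw
        have h1 := eq_single_of_wt_eq_zero (Nat.le_zero.mp hw)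
        rw [hdeg] at h1
        rw [h1]
        exact hA
      | succ M ih =>
        intro a hdeg hw
        by_cases hz : wt a = 0
        · have h1 := eq_single_of_wt_eq_zero hz
          rw [hdeg] at h1
          rw [h1]
          exact hA
        · obtain ⟨x, hx0, hax⟩ := exists_pos_of_wt_ne_zero hz
          obtain ⟨i, rfl⟩ := hidx x hx0
          have hjk : (i.castSucc : Fin (r+2)) ≠ i.succ := hne i
          set b := mv i.castSucc i.succ a with hbdef
          have hbj : 0 < b i.castSucc := by
            rw [hbdef, mv_apply_j hjk]
            omega
          have hdegb : Finsupp.degree b = s := by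
            rw [hbdef, deg_move i.castSucc i.succ a hax, hdeg]
          have hwb : wt b ≤ M := by
            have hh := wt_move i.castSucc i.succ a hax
            rw [← hbdef] at hh
            rw [Fin.coe_castSucc, Fin.val_succ] at hh
            omega
          have hbV := ih b hdegb hwb
          have hfb := (hVstab i _ hbV).2
          rw [hfT i b] at hfb
          rw [show mv i.succ i.castSucc b = a from mv_mv hjk a hax] at hfb
          have hq : qint ((ξ' i.castSucc * b i.castSucc : ℕ):ℤ) ≠ 0 :=
            qint_ne_zero (Nat.mul_pos (hξ' i.castSucc) hbj)
          have hsm := Submodule.smul_mem V (qint ((ξ' i.castSucc * b i.castSucc : ℕ):ℤ))⁻¹ hfb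
          rw [smul_smul, inv_mul_cancel₀ hq, one_smul] at hsm
          exact hsm
    -- conclude
    have hge : MvPolynomial.homogeneousSubmodule (Fin (r+2)) K s ≤ V := by
      intro p hp
      rw [p.as_sum]
      refine Submodule.sum_mem _ fun a ha => ?_
      have hdeg : Finsupp.degree a = s := by
        have h1 := (MvPolynomial.mem_homogeneousSubmodule _ _).mp hp
          (MvPolynomial.mem_support_iff.mp ha)
        rw [Finsupp.degree_eq_weight_one]
        exact h1
      have hmem := hB (wt a) a hdeg le_rfl
      have h2 : (MvPolynomial.monomial a) (MvPolynomial.coeff a p)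
          = MvPolynomial.coeff a p • MvPolynomial.monomial a (1:K) := by
        rw [MvPolynomial.smul_monomial, smul_eq_mul, mul_one]
      rw [h2]
      exact Submodule.smul_mem V _ hmem
    exact le_antisymm hVle hge
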